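/- For α > 0, x ∈ ℝ, and x₀ ∈ ℝ with x ≤ x₀, the resolvent integral ∫₀^∞ e^{-αt} ∫_{x₀}^∞ y · e^{-(y-x)²/(2t)}/√(2πt) dy dt equals e^{-√(2α)(x₀-x)} · (1/(2α√(2α)) + x₀/(2α)). -/

import Mathlib

open MeasureTheory Real Set


lemma my_exp_deriv (s : ℝ) (hs : 0 < s) (y : ℝ) :
    HasDerivAt (fun y => -(Real.exp (-(s*y))/s)) (Real.exp (-(s*y))) y := by
  have h1 : HasDerivAt (fun y : ℝ => -(s*y)) (-s) y := by
    simpa using ((hasDerivAt_id y).const_mul (-s))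
  have h2 := (Real.hasDerivAt_exp (-(s*y))).comp y h1
  have h3 := (h2.div_const s).neg
  refine h3.congr_deriv ?_
  field_simp

lemma my_exp_tendsto (s : ℝ) (hs : 0 < s) :
    Filter.Tendsto (fun y => Real.exp (-(s*y))) Filter.atTop (nhds 0) := by
  have := Real.tendsto_exp_neg_atTop_nhds_zero.comp (Filter.tendsto_id.const_mul_atTop hs)
  simpa [Function.comp_def] using this

lemma my_exp_tail (s c : ℝ) (hs : 0 < s) :
    IntegrableOn (fun y => Real.exp (-(s*y))) (Ioi c) volume ∧
      ∫ y in Ioi c, Real.exp (-(s*y)) = Real.exp (-(s*c))/s := by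
  have hcont : ContinuousWithinAt (fun y => -(Real.exp (-(s*y))/s)) (Ici c) c :=
    (Continuous.continuousWithinAt (by fun_prop))
  have hderiv : ∀ y ∈ Ioi c, HasDerivAt (fun y => -(Real.exp (-(s*y))/s)) (Real.exp (-(s*y))) y :=
    fun y _ => my_exp_deriv s hs y
  have hpos : ∀ y ∈ Ioi c, 0 ≤ Real.exp (-(s*y)) := fun y _ => (Real.exp_pos _).le
  have htend : Filter.Tendsto (fun y => -(Real.exp (-(s*y))/s)) Filter.atTop (nhds 0) := by
    have := ((my_exp_tendsto s hs).div_const s).neg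
    simpa using this
  refine ⟨integrableOn_Ioi_deriv_of_nonneg hcont hderiv hpos htend, ?_⟩
  rw [integral_Ioi_of_hasDerivAt_of_nonneg hcont hderiv hpos htend]
  ring

lemma my_linexp_tail (s c : ℝ) (hs : 0 < s) :
    IntegrableOn (fun y => (y - c) * Real.exp (-(s*y))) (Ioi c) volume ∧
      ∫ y in Ioi c, (y - c) * Real.exp (-(s*y)) = Real.exp (-(s*c))/s^2 := by
  set g : ℝ → ℝ := fun y => -(((y - c)/s + 1/s^2) * Real.exp (-(s*y))) with hg
  have hderiv : ∀ y ∈ Ioi c, HasDerivAt g ((y - c) * Real.exp (-(s*y))) y := by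
    intro y _
    have h1 : HasDerivAt (fun y : ℝ => (y - c)/s + 1/s^2) (1/s) y := by
      have := (((hasDerivAt_id y).sub_const c).div_const s).add_const (1/s^2)
      simpa [one_div] using this
    have h2 : HasDerivAt (fun y : ℝ => -(s*y)) (-s) y := by
      simpa using ((hasDerivAt_id y).const_mul (-s))
    have h3 := (Real.hasDerivAt_exp (-(s*y))).comp y h2
    have h4 := (h1.mul h3).neg
    refine h4.congr_deriv ?_
    field_simp
    simp only [Function.comp_apply]
    ring
  have hpos : ∀ y ∈ Ioi c, 0 ≤ (y - c) * Real.exp (-(s*y)) := by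
    intro y hy
    have h : (0:ℝ) ≤ y - c := by have := mem_Ioi.1 hy; linarith
    positivity
  have htend : Filter.Tendsto g Filter.atTop (nhds 0) := by
    have h1 : Filter.Tendsto (fun y : ℝ => (y - c) * Real.exp (-(s*y))) Filter.atTop (nhds 0) := by
      have hb := (Real.tendsto_pow_mul_exp_neg_atTop_nhds_zero 1).comp
        (Filter.tendsto_id.const_mul_atTop hs)
      -- hb : fun y => (s*y)^1 * exp (-(s*y)) → 0
      have h2 : Filter.Tendsto (fun y : ℝ => (s*y) * Real.exp (-(s*y))) Filter.atTop (nhds 0) := by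
        simpa [Function.comp_def] using hb
      have h3 := (h2.div_const s).sub ((my_exp_tendsto s hs).const_mul c)
      have : (fun y : ℝ => (s*y) * Real.exp (-(s*y)) / s - c * Real.exp (-(s*y)))
          = fun y : ℝ => (y - c) * Real.exp (-(s*y)) := by
        funext y; field_simp
      rw [this] at h3
      simpa using h3
    have h4 := ((h1.div_const s).add ((my_exp_tendsto s hs).div_const (s^2))).neg
    have : (fun y : ℝ => -((y - c) * Real.exp (-(s*y)) / s + Real.exp (-(s*y)) / s^2)) = g := by
      funext y; simp [hg]; ring
    rw [this] at h4
    simpa using h4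
  have hcont : ContinuousWithinAt g (Ici c) c :=
    (Continuous.continuousWithinAt (by simp only [hg]; fun_prop))
  refine ⟨integrableOn_Ioi_deriv_of_nonneg hcont hderiv hpos htend, ?_⟩
  rw [integral_Ioi_of_hasDerivAt_of_nonneg hcont hderiv hpos htend]
  simp only [hg]
  field_simp
  ring


lemma my_glasser (a c : ℝ) (ha : 0 < a) (hc : 0 < c) :
    ∫ u in Ioi (0:ℝ), Real.exp (-(a*u^2 + c/u^2))
      = Real.sqrt (π/a)/2 * Real.exp (-2*Real.sqrt (a*c)) := by
  set r := Real.sqrt (c/a) with hrdef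
  have hrpos : 0 < r := Real.sqrt_pos.2 (div_pos hc ha)
  have hr2 : r^2 = c/a := Real.sq_sqrt (div_nonneg hc.le ha.le)
  have har2 : a * r^2 = c := by rw [hr2]; field_simp
  have hcr2 : c / r^2 = a := by rw [hr2]; field_simp
  have h2ar : 2*a*r = 2*Real.sqrt (a*c) := by
    have h : a * r = Real.sqrt (a*c) := by
      rw [hrdef, ← Real.sqrt_sq ha.le, ← Real.sqrt_mul (sq_nonneg a)]
      congr 1; field_simp; ring_nf; rw [Real.sq_sqrt (sq_nonneg a)]
    linarith
  set g : ℝ → ℝ := fun u => Real.exp (-(a*u^2 + c/u^2)) with hgdef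
  -- first substitution u ↦ r/u
  have himg : (fun u : ℝ => r/u) '' (Ioi 0) = Ioi (0:ℝ) := by
    ext v
    constructor
    · rintro ⟨u, hu, rfl⟩
      exact div_pos hrpos hu
    · intro hv
      exact ⟨r/v, div_pos hrpos hv, by field_simp⟩
  have hderiv : ∀ u ∈ Ioi (0:ℝ), HasDerivWithinAt (fun u : ℝ => r/u) (-(r/u^2)) (Ioi 0) u := by
    intro u hu
    have hu0 : (0:ℝ) < u := hu
    have h := (hasDerivAt_inv hu0.ne').const_mul r
    have h2 : HasDerivAt (fun u : ℝ => r/u) (-(r/u^2)) u := by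
      refine h.congr_deriv ?_
      field_simp
    exact h2.hasDerivWithinAt
  have hinj : InjOn (fun u : ℝ => r/u) (Ioi 0) := by
    intro u1 h1 u2 h2 he
    have h10 : (0:ℝ) < u1 := h1
    have h20 : (0:ℝ) < u2 := h2
    field_simp at he
    exact he.symm
  have hgrg : ∀ u ∈ Ioi (0:ℝ), g (r/u) = g u := by
    intro u hu
    have hu0 : (0:ℝ) < u := hu
    simp only [hgdef]
    congr 1
    have e1 : a*(r/u)^2 = c/u^2 := by rw [div_pow, ← har2]; ring
    have e2 : c/(r/u)^2 = a*u^2 := by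
      rw [div_pow, div_div_eq_mul_div, ← hcr2]; ring
    rw [e1, e2, add_comm]
  have step1 : ∫ u in Ioi (0:ℝ), g u = ∫ u in Ioi (0:ℝ), (r/u^2) * g u := by
    conv_lhs => rw [← himg]
    rw [integral_image_eq_integral_abs_deriv_smul measurableSet_Ioi hderiv hinj g]
    apply setIntegral_congr_fun measurableSet_Ioi
    intro u hu
    have hu0 : (0:ℝ) < u := hu
    have habs : |(-(r/u^2))| = r/u^2 := by rw [abs_neg, abs_of_pos (by positivity)]
    simp only [smul_eq_mul]
    rw [habs, hgrg u hu]
  -- second substitution ψ u = u - r/u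
  set ψ : ℝ → ℝ := fun u => u - r/u with hψdef
  have hψimg : ψ '' (Ioi 0) = (univ : Set ℝ) := by
    refine eq_univ_iff_forall.2 (fun v => ?_)
    set w := Real.sqrt (v^2 + 4*r) with hwdef
    have hs4 : (0:ℝ) < v^2 + 4*r := by positivity
    have hsq : w^2 = v^2 + 4*r := Real.sq_sqrt hs4.le
    have hgt : |v| < w := by
      rw [hwdef, ← Real.sqrt_sq_eq_abs]
      exact Real.sqrt_lt_sqrt (sq_nonneg v) (by linarith)
    have hvle : -v ≤ |v| := neg_le_abs v
    have hupos : (0:ℝ) < (v + w)/2 := by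
      have : -v < w := lt_of_le_of_lt hvle hgt
      linarith
    refine ⟨(v + w)/2, hupos, ?_⟩
    have key : ((v+w)/2)^2 - v*((v+w)/2) = r := by linear_combination (1/4 : ℝ) * hsq
    have hrux : r/((v+w)/2) = (v+w)/2 - v := by
      rw [div_eq_iff hupos.ne']
      linear_combination -key
    simp only [hψdef]
    rw [hrux]; ring
  have hψderiv : ∀ u ∈ Ioi (0:ℝ), HasDerivWithinAt ψ (1 + r/u^2) (Ioi 0) u := by
    intro u hu
    have hu0 : (0:ℝ) < u := hu
    have h := (hasDerivAt_id u).sub ((hasDerivAt_inv hu0.ne').const_mul r)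
    have h2 : HasDerivAt ψ (1 + r/u^2) u := by
      refine h.congr_deriv ?_
      field_simp
      ring
    exact h2.hasDerivWithinAt
  have hψinj : InjOn ψ (Ioi 0) := by
    have : StrictMonoOn ψ (Ioi 0) := by
      intro u1 h1 u2 h2 hlt
      have h10 : (0:ℝ) < u1 := h1
      have h20 : (0:ℝ) < u2 := h2
      have : r/u2 < r/u1 := div_lt_div_of_pos_left hrpos h10 hlt
      simp only [hψdef]
      linarith
    exact this.injOn
  have hsub2 : ∫ x : ℝ, Real.exp (-a*x^2)
      = ∫ u in Ioi (0:ℝ), |1 + r/u^2| * Real.exp (-a*(ψ u)^2) := by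
    rw [← setIntegral_univ, ← hψimg,
      integral_image_eq_integral_abs_deriv_smul measurableSet_Ioi hψderiv hψinj
        (fun x => Real.exp (-a*x^2))]
    simp only [smul_eq_mul]
  have hptwise : ∀ u ∈ Ioi (0:ℝ),
      g u + (r/u^2) * g u
        = Real.exp (-2*Real.sqrt (a*c)) * (|1 + r/u^2| * Real.exp (-a*(ψ u)^2)) := by
    intro u hu
    have hu0 : (0:ℝ) < u := hu
    have habs : |1 + r/u^2| = 1 + r/u^2 := abs_of_pos (by positivity)
    rw [habs]
    have hexp : a*u^2 + c/u^2 = a*(ψ u)^2 + 2*Real.sqrt (a*c) := by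
      simp only [hψdef]
      rw [← h2ar]
      have e : a*(u - r/u)^2 + 2*a*r = a*u^2 + (a*r^2)/u^2 := by field_simp; ring
      rw [e, har2]
    have hge : g u = Real.exp (-2*Real.sqrt (a*c)) * Real.exp (-a*(ψ u)^2) := by
      simp only [hgdef]
      rw [← Real.exp_add]
      congr 1
      linear_combination -hexp
    rw [hge]; ring
  -- integrability
  have hmeas : Measurable g := by
    simp only [hgdef]; fun_prop
  have hgi : IntegrableOn g (Ioi 0) volume := by
    apply Integrable.mono' ((integrable_exp_neg_mul_sq ha).integrableOn)
      hmeas.aestronglyMeasurable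
    rw [ae_restrict_iff' measurableSet_Ioi]
    filter_upwards with u hu
    have hu0 : (0:ℝ) < u := hu
    have h1 : (0:ℝ) ≤ c/u^2 := by positivity
    rw [Real.norm_eq_abs, abs_of_pos (Real.exp_pos _)]
    apply Real.exp_le_exp.2
    nlinarith
  have hgi2 : IntegrableOn (fun u => (r/u^2) * g u) (Ioi 0) volume := by
    have h := (integrableOn_image_iff_integrableOn_abs_deriv_smul measurableSet_Ioi hderiv
      hinj g).1 (by rw [himg]; exact hgi)
    apply (integrable_congr ?_).1 h
    rw [Filter.eventuallyEq_iff_exists_mem]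
    refine ⟨Ioi 0, self_mem_ae_restrict measurableSet_Ioi, fun u hu => ?_⟩
    have hu0 : (0:ℝ) < u := hu
    have habs : |(-(r/u^2))| = r/u^2 := by rw [abs_neg, abs_of_pos (by positivity)]
    simp only [smul_eq_mul, habs, hgrg u hu]
  have hsum : (∫ u in Ioi (0:ℝ), g u) + ∫ u in Ioi (0:ℝ), (r/u^2) * g u
      = ∫ u in Ioi (0:ℝ), (g u + (r/u^2) * g u) := (integral_add hgi hgi2).symm
  have hval : ∫ u in Ioi (0:ℝ), (g u + (r/u^2) * g u)
      = Real.exp (-2*Real.sqrt (a*c)) * Real.sqrt (π/a) := by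
    rw [setIntegral_congr_fun measurableSet_Ioi hptwise, integral_const_mul, ← hsub2,
      integral_gaussian]
  have : (2:ℝ) * ∫ u in Ioi (0:ℝ), g u
      = Real.exp (-2*Real.sqrt (a*c)) * Real.sqrt (π/a) := by
    rw [two_mul]
    calc (∫ u in Ioi (0:ℝ), g u) + ∫ u in Ioi (0:ℝ), g u
        = (∫ u in Ioi (0:ℝ), g u) + ∫ u in Ioi (0:ℝ), (r/u^2) * g u := by rw [← step1]
      _ = _ := by rw [hsum, hval]
  have hfin : ∫ u in Ioi (0:ℝ), g u = Real.sqrt (π/a)/2 * Real.exp (-2*Real.sqrt (a*c)) := by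
    linarith
  exact hfin

lemma my_kernel (α b : ℝ) (hα : 0 < α) (hb : 0 < b) :
    ∫ t in Ioi (0:ℝ), Real.exp (-α * t) * Real.exp (-b^2/(2*t)) / Real.sqrt (2*π*t)
      = Real.exp (-Real.sqrt (2*α) * b) / Real.sqrt (2*α) := by
  have himg : (fun u : ℝ => u^2) '' (Ioi 0) = Ioi (0:ℝ) := by
    ext v
    constructor
    · rintro ⟨u, hu, rfl⟩
      exact pow_pos (mem_Ioi.1 hu) 2
    · intro hv
      exact ⟨Real.sqrt v, Real.sqrt_pos.2 hv, Real.sq_sqrt (le_of_lt hv)⟩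
  have hderiv : ∀ u ∈ Ioi (0:ℝ), HasDerivWithinAt (fun u : ℝ => u^2) (2*u) (Ioi 0) u := by
    intro u _
    have := hasDerivAt_pow 2 u
    simpa using this.hasDerivWithinAt
  have hinj : InjOn (fun u : ℝ => u^2) (Ioi 0) := by
    intro u1 h1 u2 h2 he
    have h10 : (0:ℝ) < u1 := h1
    have h20 : (0:ℝ) < u2 := h2
    have he' : u1^2 = u2^2 := he
    have hf : (u1 - u2) * (u1 + u2) = 0 := by linear_combination he'
    rcases mul_eq_zero.1 hf with h | h
    · linarith
    · linarith
  set f : ℝ → ℝ := fun t => Real.exp (-α * t) * Real.exp (-b^2/(2*t)) / Real.sqrt (2*π*t)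
    with hfdef
  have step : ∫ t in Ioi (0:ℝ), f t
      = ∫ u in Ioi (0:ℝ), (2/Real.sqrt (2*π)) * Real.exp (-(α*u^2 + (b^2/2)/u^2)) := by
    conv_lhs => rw [← himg]
    rw [integral_image_eq_integral_abs_deriv_smul measurableSet_Ioi hderiv hinj f]
    apply setIntegral_congr_fun measurableSet_Ioi
    intro u hu
    have hu0 : (0:ℝ) < u := hu
    simp only [smul_eq_mul, hfdef]
    have hsq : Real.sqrt (2*π*u^2) = Real.sqrt (2*π) * u := by
      rw [Real.sqrt_mul (by positivity) (u^2), Real.sqrt_sq hu0.le]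
    rw [hsq, abs_of_pos (by positivity), ← Real.exp_add]
    have hπ : (0:ℝ) < Real.sqrt (2*π) := Real.sqrt_pos.2 (by positivity)
    rw [show -α * u^2 + -b^2/(2*u^2) = -(α*u^2 + (b^2/2)/u^2) from by ring]
    field_simp
  rw [step, integral_const_mul, my_glasser α (b^2/2) hα (by positivity)]
  have h1 : Real.sqrt (α*(b^2/2)) = Real.sqrt (2*α)*b/2 := by
    have h2 : (Real.sqrt (2*α)*b/2)^2 = α*(b^2/2) := by
      rw [div_pow, mul_pow, Real.sq_sqrt (by positivity : (0:ℝ) ≤ 2*α)]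
      ring
    rw [← h2, Real.sqrt_sq (by positivity)]
  rw [h1]
  have h2 : Real.sqrt (π/α) * Real.sqrt (2*α) = Real.sqrt (2*π) := by
    rw [← Real.sqrt_mul (by positivity)]
    congr 1
    field_simp
  have hs2π : (0:ℝ) < Real.sqrt (2*π) := Real.sqrt_pos.2 (by positivity)
  have hs2α : (0:ℝ) < Real.sqrt (2*α) := Real.sqrt_pos.2 (by positivity)
  rw [show -2*(Real.sqrt (2*α)*b/2) = -Real.sqrt (2*α)*b from by ring, ← h2]
  have hπα : (0:ℝ) < Real.sqrt (π/α) := Real.sqrt_pos.2 (by positivity)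
  field_simp

lemma my_kernel_int (α b : ℝ) (hα : 0 < α) :
    IntegrableOn (fun t => Real.exp (-α * t) * Real.exp (-b^2/(2*t)) / Real.sqrt (2*π*t))
      (Ioi 0) volume := by
  set f : ℝ → ℝ := fun t => Real.exp (-α * t) * Real.exp (-b^2/(2*t)) / Real.sqrt (2*π*t)
    with hfdef
  have hmeas : Measurable f := by simp only [hfdef]; fun_prop
  have hbd : ∀ t : ℝ, 0 < t → ‖f t‖ ≤ 1 / Real.sqrt (2*π*t) := by
    intro t ht
    have h1 : (0:ℝ) < Real.sqrt (2*π*t) := Real.sqrt_pos.2 (by positivity)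
    have e1 : Real.exp (-α * t) ≤ 1 := Real.exp_le_one_iff.2 (by nlinarith)
    have e2 : Real.exp (-b^2/(2*t)) ≤ 1 := by
      apply Real.exp_le_one_iff.2
      rw [neg_div]
      have : (0:ℝ) ≤ b^2/(2*t) := by positivity
      linarith
    have hnn : 0 ≤ f t := by
      simp only [hfdef]
      positivity
    rw [Real.norm_eq_abs, abs_of_nonneg hnn]
    simp only [hfdef]
    rw [div_le_div_iff₀ h1 h1]
    have := mul_le_one₀ e1 (Real.exp_pos _).le e2
    nlinarith [Real.exp_pos (-α * t), Real.exp_pos (-b^2/(2*t))]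
  have split : Ioc (0:ℝ) 1 ∪ Ioi (1:ℝ) = Ioi (0:ℝ) := Ioc_union_Ioi_eq_Ioi zero_le_one
  rw [← split]
  apply IntegrableOn.union
  · -- on Ioc 0 1 : compare with t ^ (-1/2)
    have hint : IntegrableOn (fun t : ℝ => (Real.sqrt (2*π))⁻¹ * t ^ (-(1/2) : ℝ))
        (Ioc (0:ℝ) 1) volume := by
      apply Integrable.const_mul
      have h := intervalIntegral.intervalIntegrable_rpow' (r := -(1/2)) (a := 0) (b := 1) (by norm_num)
      exact (intervalIntegrable_iff_integrableOn_Ioc_of_le zero_le_one).1 h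
    apply Integrable.mono' hint hmeas.aestronglyMeasurable
    rw [ae_restrict_iff' measurableSet_Ioc]
    filter_upwards with t ht
    have ht0 : (0:ℝ) < t := ht.1
    refine (hbd t ht0).trans (le_of_eq ?_)
    rw [Real.sqrt_mul (by positivity) t, one_div, mul_inv,
      Real.rpow_neg ht0.le, ← Real.sqrt_eq_rpow]
  · -- on Ioi 1 : compare with exp (-α t)
    apply Integrable.mono' (exp_neg_integrableOn_Ioi 1 hα) hmeas.aestronglyMeasurable
    rw [ae_restrict_iff' measurableSet_Ioi]
    filter_upwards with t ht
    have ht1 : (1:ℝ) < t := ht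
    have ht0 : (0:ℝ) < t := by linarith
    have h1 : (1:ℝ) ≤ Real.sqrt (2*π*t) := by
      rw [show (1:ℝ) = Real.sqrt 1 from (Real.sqrt_one).symm]
      apply Real.sqrt_le_sqrt
      nlinarith [pi_gt_three]
    have hnn : 0 ≤ f t := by simp only [hfdef]; positivity
    rw [Real.norm_eq_abs, abs_of_nonneg hnn]
    simp only [hfdef]
    calc Real.exp (-α * t) * Real.exp (-b^2/(2*t)) / Real.sqrt (2*π*t)
        ≤ Real.exp (-α * t) * 1 / 1 := by
          apply div_le_div₀ (by positivity) ?_ one_pos h1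
          have e2 : Real.exp (-b^2/(2*t)) ≤ 1 := by
            apply Real.exp_le_one_iff.2
            rw [neg_div]
            have : (0:ℝ) ≤ b^2/(2*t) := by positivity
            linarith
          nlinarith [Real.exp_pos (-α * t)]
      _ = Real.exp (-α * t) := by ring

/-- Resolvent integral for x ≤ x₀:
∫₀^∞ e^{-αt} ∫_{x₀}^∞ y e^{-(y-x)²/(2t)}/√(2πt) dy dt
  = e^{-√(2α)(x₀-x)} (1/(2α√(2α)) + x₀/(2α)). -/
theorem stmt12 (α x x₀ : ℝ) (hα : 0 < α) (hx : x ≤ x₀) :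
    ∫ t in Ioi (0:ℝ), Real.exp (-α * t) *
        ∫ y in Ioi x₀, y * Real.exp (-(y - x) ^ 2 / (2 * t)) / Real.sqrt (2 * π * t)
      = Real.exp (-Real.sqrt (2 * α) * (x₀ - x))
          * (1 / (2 * α * Real.sqrt (2 * α)) + x₀ / (2 * α)) := by
  set s := Real.sqrt (2*α) with hsdef
  have hs : 0 < s := Real.sqrt_pos.2 (by positivity)
  have hs2 : s^2 = 2*α := Real.sq_sqrt (by positivity)
  set F : ℝ → ℝ → ℝ :=
    fun t y => Real.exp (-α * t) * (y * Real.exp (-(y - x)^2 / (2*t)) / Real.sqrt (2*π*t))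
    with hFdef
  have hL : (∫ t in Ioi (0:ℝ), Real.exp (-α * t) *
        ∫ y in Ioi x₀, y * Real.exp (-(y - x)^2 / (2*t)) / Real.sqrt (2*π*t))
      = ∫ t in Ioi (0:ℝ), ∫ y in Ioi x₀, F t y := by
    apply setIntegral_congr_fun measurableSet_Ioi
    intro t _
    exact (integral_const_mul _ _).symm
  have hFm : Measurable (Function.uncurry F) := by
    simp only [hFdef, Function.uncurry]
    fun_prop
  have hexp : ∀ y ∈ Ioi x₀, (∫ t in Ioi (0:ℝ), ‖F t y‖)
      = |y| * (Real.exp (-s*(y-x))/s) := by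
    intro y hy
    have hyx : x < y := lt_of_le_of_lt hx hy
    have h1 : ∀ t : ℝ, ‖F t y‖
        = |y| * (Real.exp (-α*t) * Real.exp (-(y-x)^2/(2*t)) / Real.sqrt (2*π*t)) := by
      intro t
      simp only [hFdef]
      rw [Real.norm_eq_abs, abs_mul, abs_div, abs_mul, abs_of_pos (Real.exp_pos _),
        abs_of_pos (Real.exp_pos _), abs_of_nonneg (Real.sqrt_nonneg _)]
      ring
    calc ∫ t in Ioi (0:ℝ), ‖F t y‖
        = ∫ t in Ioi (0:ℝ), |y| * (Real.exp (-α*t) * Real.exp (-(y-x)^2/(2*t))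
            / Real.sqrt (2*π*t)) := setIntegral_congr_fun measurableSet_Ioi (fun t _ => h1 t)
      _ = |y| * (Real.exp (-s*(y-x))/s) := by
          rw [integral_const_mul, my_kernel α (y-x) hα (by linarith), hsdef]
  have hintabs : IntegrableOn (fun y => |y| * (Real.exp (-s*(y-x))/s)) (Ioi x₀) volume := by
    have h1 := (my_linexp_tail s x₀ hs).1
    have h2 := (my_exp_tail s x₀ hs).1
    have hbI : IntegrableOn (fun y => ((y - x₀) + |x₀|) * (Real.exp (-s*(y-x))/s))
        (Ioi x₀) volume := by
      have h3 := (h1.const_mul (Real.exp (s*x)/s)).add (h2.const_mul (|x₀| * Real.exp (s*x)/s))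
      apply Integrable.congr h3
      apply Filter.Eventually.of_forall
      intro y
      simp only [Pi.add_apply]
      rw [show -s*(y-x) = -(s*y) + s*x from by ring, Real.exp_add]
      ring
    apply Integrable.mono' hbI
    · apply Measurable.aestronglyMeasurable
      fun_prop
    · rw [ae_restrict_iff' measurableSet_Ioi]
      filter_upwards with y hy
      have hy0 : x₀ < y := hy
      have habs : |y| ≤ (y - x₀) + |x₀| := by
        calc |y| = |(y - x₀) + x₀| := by ring_nf
          _ ≤ |y - x₀| + |x₀| := abs_add_le _ _
          _ = (y - x₀) + |x₀| := by rw [abs_of_nonneg (by linarith)]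
      have hE : (0:ℝ) ≤ Real.exp (-s*(y-x))/s := by positivity
      rw [Real.norm_eq_abs, abs_of_nonneg (by positivity)]
      exact mul_le_mul_of_nonneg_right habs hE
  have hInt : Integrable (Function.uncurry F)
      ((volume.restrict (Ioi 0)).prod (volume.restrict (Ioi x₀))) := by
    refine (integrable_prod_iff' hFm.aestronglyMeasurable).2 ⟨?_, ?_⟩
    · rw [ae_restrict_iff' measurableSet_Ioi]
      filter_upwards with y hy
      have hyx : x < y := lt_of_le_of_lt hx hy
      have h := (my_kernel_int α (y - x) hα).const_mul y
      apply Integrable.congr h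
      apply Filter.Eventually.of_forall
      intro t
      simp only [hFdef, Function.uncurry]
      ring
    · apply Integrable.congr hintabs
      refine Filter.eventuallyEq_of_mem (self_mem_ae_restrict measurableSet_Ioi)
        (fun y hy => ?_)
      exact (hexp y hy).symm
  have hswap : (∫ t in Ioi (0:ℝ), ∫ y in Ioi x₀, F t y)
      = ∫ y in Ioi x₀, ∫ t in Ioi (0:ℝ), F t y := integral_integral_swap hInt
  have hinner : ∀ y ∈ Ioi x₀, (∫ t in Ioi (0:ℝ), F t y) = y * (Real.exp (-s*(y-x))/s) := by
    intro y hy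
    have hyx : x < y := lt_of_le_of_lt hx hy
    calc ∫ t in Ioi (0:ℝ), F t y
        = ∫ t in Ioi (0:ℝ), y * (Real.exp (-α*t) * Real.exp (-(y-x)^2/(2*t))
            / Real.sqrt (2*π*t)) := by
          apply setIntegral_congr_fun measurableSet_Ioi
          intro t _
          simp only [hFdef]
          ring
      _ = y * (Real.exp (-s*(y-x))/s) := by
          rw [integral_const_mul, my_kernel α (y-x) hα (by linarith), hsdef]
  have hmid : (∫ y in Ioi x₀, ∫ t in Ioi (0:ℝ), F t y)
      = ∫ y in Ioi x₀, y * (Real.exp (-s*(y-x))/s) :=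
    setIntegral_congr_fun measurableSet_Ioi (fun y hy => hinner y hy)
  have hfin : (∫ y in Ioi x₀, y * (Real.exp (-s*(y-x))/s))
      = Real.exp (-s*(x₀-x)) * (1/s^3 + x₀/s^2) := by
    have h1 := my_linexp_tail s x₀ hs
    have h2 := my_exp_tail s x₀ hs
    have key : ∀ y : ℝ, y * (Real.exp (-s*(y-x))/s)
        = (Real.exp (s*x)/s) * ((y - x₀) * Real.exp (-(s*y)))
          + (x₀ * Real.exp (s*x)/s) * Real.exp (-(s*y)) := by
      intro y
      rw [show -s*(y-x) = -(s*y) + s*x from by ring, Real.exp_add]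
      ring
    rw [setIntegral_congr_fun measurableSet_Ioi (fun y _ => key y),
      integral_add (h1.1.const_mul _) (h2.1.const_mul _),
      integral_const_mul, integral_const_mul, h1.2, h2.2,
      show -s*(x₀-x) = -(s*x₀) + s*x from by ring, Real.exp_add]
    field_simp
  rw [hL, hswap, hmid, hfin, ← hs2]
  ring
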